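/- Let F be a field, H ∈ F^{p×p}, K ∈ F^{p×q}, and let E be an extension field of F containing all eigenvalues of H. Then for any integer d greater than or equal to the degree of the minimal polynomial of H, the block matrix [K, HK, …, H^{d−1}K] has rank p over F if and only if for every eigenvalue λ of H (in E), the matrix [λI − H, K] has rank p over E. -/

import Mathlib

open Matrix Polynomial

section Aux

variable {R : Type*}

/-- vecMul with a scalar multiple of a matrix. -/
lemma vecMul_smul_matrix [CommRing R] {m n : Type*} [Fintype m]
    (c : R) (M : Matrix m n R) (v : m → R) :
    v ᵥ* (c • M) = c • (v ᵥ* M) := by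
  ext j
  simp [Matrix.vecMul, dotProduct, Finset.mul_sum, mul_left_comm]

/-- vecMul distributes over finite sums of matrices. -/
lemma vecMul_sum_matrix [CommRing R] {m n : Type*} [Fintype m] {β : Type*}
    (s : Finset β) (A : β → Matrix m n R) (v : m → R) :
    v ᵥ* (∑ i ∈ s, A i) = ∑ i ∈ s, v ᵥ* (A i) := by
  ext k
  simp only [Matrix.vecMul, dotProduct, Matrix.sum_apply, Finset.sum_apply,
    Finset.mul_sum]
  rw [Finset.sum_comm]

/-- Full row rank iff trivial left kernel. -/
lemma rank_eq_card_iff_vecMul [Field R] {p : ℕ} {ι : Type*} [Fintype ι]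
    (M : Matrix (Fin p) ι R) :
    M.rank = p ↔ ∀ v : Fin p → R, v ᵥ* M = 0 → v = 0 := by
  have hker : ∀ v : Fin p → R, v ∈ LinearMap.ker (Mᵀ.mulVecLin) ↔ v ᵥ* M = 0 := by
    intro v
    rw [LinearMap.mem_ker, Matrix.mulVecLin_apply, Matrix.mulVec_transpose]
  have hrn := LinearMap.finrank_range_add_finrank_ker (Mᵀ.mulVecLin)
  have hfin : Module.finrank R (Fin p → R) = p := Module.finrank_fin_fun R
  rw [hfin] at hrn
  have hR : M.rank = Module.finrank R (LinearMap.range (Mᵀ.mulVecLin)) := by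
    rw [← Matrix.rank_transpose M]; rfl
  constructor
  · intro h v hv
    rw [hR] at h
    have hbot : LinearMap.ker (Mᵀ.mulVecLin) = ⊥ :=
      Submodule.finrank_eq_zero.mp (by omega)
    have hm := (hker v).mpr hv
    rw [hbot, Submodule.mem_bot] at hm
    exact hm
  · intro h
    have hbot : LinearMap.ker (Mᵀ.mulVecLin) = ⊥ := by
      rw [eq_bot_iff]
      intro v hv
      rw [Submodule.mem_bot]
      exact h v ((hker v).mp hv)
    have hz : Module.finrank R (LinearMap.ker (Mᵀ.mulVecLin)) = 0 := by
      rw [hbot]; simp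
    rw [hR]; omega

/-- Full row rank is preserved by mapping along a field embedding. -/
lemma rank_map_eq_card_iff {R S : Type*} [Field R] [Field S] (σ : R →+* S)
    {p : ℕ} {ι : Type*} [Fintype ι] (M : Matrix (Fin p) ι R) :
    (M.map σ).rank = p ↔ M.rank = p := by
  constructor
  · intro h
    by_contra hM
    obtain ⟨v, hv, hv0⟩ : ∃ v : Fin p → R, v ᵥ* M = 0 ∧ v ≠ 0 := by
      by_contra hcon
      push_neg at hcon
      exact hM ((rank_eq_card_iff_vecMul M).mpr fun v hv => hcon v hv)
    have h1 : (fun i => σ (v i)) ᵥ* (M.map σ) = 0 := by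
      ext j
      have hj := congrFun hv j
      simp only [Matrix.vecMul, dotProduct, Pi.zero_apply,
        Matrix.map_apply] at hj ⊢
      rw [← map_zero σ, ← hj, map_sum]
      simp [_root_.map_mul]
    have := (rank_eq_card_iff_vecMul (M.map σ)).mp h _ h1
    apply hv0
    ext i
    have := congrFun this i
    simp only [Pi.zero_apply] at this
    exact σ.injective (by simpa using this)
  · intro h
    -- get a right inverse over R
    have hsurj : LinearMap.range M.mulVecLin = ⊤ := by
      apply Submodule.eq_top_of_finrank_eq
      rw [← Matrix.rank, h, Module.finrank_fin_fun]
    obtain ⟨g, hg⟩ := M.mulVecLin.exists_rightInverse_of_surjective hsurj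
    set B : Matrix ι (Fin p) R := LinearMap.toMatrix' g with hB
    have hMB : M * B = 1 := by
      have hmv : ∀ x : Fin p → R, (M * B) *ᵥ x = x := by
        intro x
        rw [← Matrix.mulVec_mulVec]
        have hBx : B *ᵥ x = g x := by
          rw [← Matrix.toLin'_apply, hB, Matrix.toLin'_toMatrix']
        rw [hBx]
        have := congrArg (fun f => f x) hg
        simpa [Matrix.mulVecLin_apply] using this
      ext i j
      have h1 := congrFun (hmv (Pi.single j 1)) i
      simpa [Matrix.mulVec_single, Matrix.one_apply, Pi.single_apply,
        eq_comm] using h1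
    have hMB' : (M.map σ) * (B.map σ) = 1 := by
      rw [← Matrix.map_mul, hMB]
      exact Matrix.map_one σ (map_zero σ) (map_one σ)
    have h1 : p = ((M.map σ) * (B.map σ)).rank := by
      rw [hMB', Matrix.rank_one, Fintype.card_fin]
    have h2 : ((M.map σ) * (B.map σ)).rank ≤ (M.map σ).rank :=
      Matrix.rank_mul_le_left _ _
    have h3 : (M.map σ).rank ≤ p := by
      simpa using (M.map σ).rank_le_card_height
    omega

/-- aeval at a transposed matrix. -/
lemma aeval_transpose [CommRing R] {n : Type*} [Fintype n] [DecidableEq n]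
    (M : Matrix n n R) (P : R[X]) :
    Polynomial.aeval Mᵀ P = (Polynomial.aeval M P)ᵀ := by
  induction P using Polynomial.induction_on' with
  | add p q hp hq => rw [map_add, map_add, hp, hq, Matrix.transpose_add]
  | monomial k a =>
      rw [Polynomial.aeval_monomial, Polynomial.aeval_monomial,
        Matrix.transpose_mul, ← Matrix.transpose_pow]
      have halg : ((algebraMap R (Matrix n n R)) a)ᵀ = (algebraMap R (Matrix n n R)) a := by
        simp [Matrix.algebraMap_eq_diagonal]
      rw [halg]
      exact Algebra.commutes a _

/-- Powers of an endomorphism preserve an invariant submodule. -/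
lemma pow_mem_of_invariant {K M : Type*} [Field K] [AddCommGroup M] [Module K M]
    (f : M →ₗ[K] M) (V : Submodule K M) (hV : ∀ x ∈ V, f x ∈ V)
    (u : M) (hu : u ∈ V) : ∀ n : ℕ, (f ^ n) u ∈ V := by
  intro n
  induction n with
  | zero => simpa using hu
  | succ n ih =>
      rw [pow_succ', Module.End.mul_apply]
      exact hV _ ih

/-- Polynomials in an endomorphism preserve an invariant submodule. -/
lemma aeval_mem_of_invariant {K M : Type*} [Field K] [AddCommGroup M] [Module K M]
    (f : M →ₗ[K] M) (V : Submodule K M) (hV : ∀ x ∈ V, f x ∈ V)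
    (P : K[X]) (u : M) (hu : u ∈ V) : (Polynomial.aeval f P) u ∈ V := by
  induction P using Polynomial.induction_on' with
  | add p q hp hq =>
      rw [map_add, LinearMap.add_apply]
      exact V.add_mem hp hq
  | monomial k a =>
      rw [Polynomial.aeval_monomial, Module.End.mul_apply,
        Module.algebraMap_end_apply]
      exact V.smul_mem a (pow_mem_of_invariant f V hV u hu k)

/-- If a product of linear factors annihilates a nonzero vector of an invariant
subspace, then the subspace contains an eigenvector with eigenvalue among the
roots. -/
lemma exists_eigen_of_prod {K M : Type*} [Field K] [AddCommGroup M] [Module K M]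
    (f : M →ₗ[K] M) (V : Submodule K M) (hV : ∀ x ∈ V, f x ∈ V) :
    ∀ (l : List K) (u : M), u ∈ V → u ≠ 0 →
      (Polynomial.aeval f (l.map (fun a => X - C a)).prod) u = 0 →
      ∃ lam ∈ l, ∃ w ∈ V, w ≠ 0 ∧ f w = lam • w := by
  intro l
  induction l with
  | nil =>
      intro u _ hu h
      simp only [List.map_nil, List.prod_nil, _root_.map_one, Module.End.one_apply] at h
      exact absurd h hu
  | cons a t ih =>
      intro u huV hu h
      set u' := (Polynomial.aeval f (t.map (fun a => X - C a)).prod) u with hu'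
      by_cases h0 : u' = 0
      · obtain ⟨lam, hlam, w, hw⟩ := ih u huV hu h0
        exact ⟨lam, List.mem_cons_of_mem a hlam, w, hw⟩
      · refine ⟨a, List.mem_cons_self, u',
          aeval_mem_of_invariant f V hV _ u huV, h0, ?_⟩
        have hprod : ((a :: t).map (fun a => X - C a)).prod
            = (X - C a) * (t.map (fun a => X - C a)).prod := by
          simp
        rw [hprod, _root_.map_mul, Module.End.mul_apply, ← hu'] at h
        have : (Polynomial.aeval f (X - C a)) u' = f u' - a • u' := by
          rw [map_sub, Polynomial.aeval_X, Polynomial.aeval_C,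
            LinearMap.sub_apply, Module.algebraMap_end_apply]
        rw [this] at h
        rw [sub_eq_zero] at h
        exact h

end Aux

/-- Hautus-type lemma: for d ≥ deg μ_H, the controllability matrix
[K, HK, …, H^{d-1}K] has rank p over F iff [λI − H, K] has rank p over E
for every eigenvalue λ of H in E. -/
theorem rank_ctrb_eq_iff_rank_pbh
    {F E : Type*} [Field F] [Field E] [Algebra F E] {p q : ℕ}
    (H : Matrix (Fin p) (Fin p) F) (K : Matrix (Fin p) (Fin q) F)
    (hsplit : (H.charpoly.map (algebraMap F E)).Splits)
    (d : ℕ) (hd : (minpoly F H).natDegree ≤ d) :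
    (Matrix.of fun (i : Fin p) (dq : Fin d × Fin q) =>
        (H ^ (dq.1 : ℕ) * K) i dq.2).rank = p ↔
      ∀ lam : E, (Polynomial.aeval lam) H.charpoly = 0 →
        (Matrix.fromCols (lam • (1 : Matrix (Fin p) (Fin p) E) - H.map (algebraMap F E))
          (K.map (algebraMap F E))).rank = p := by
  rcases Nat.eq_zero_or_pos p with hp | hp
  · subst hp
    constructor
    · intro _ lam _
      have := Matrix.rank_le_card_height (Matrix.fromCols
        (lam • (1 : Matrix (Fin 0) (Fin 0) E) - H.map (algebraMap F E))
        (K.map (algebraMap F E)))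
      simpa using this
    · intro _
      have := Matrix.rank_le_card_height (Matrix.of fun (i : Fin 0) (dq : Fin d × Fin q) =>
        (H ^ (dq.1 : ℕ) * K) i dq.2)
      simpa using this
  set σ := algebraMap F E with hσ
  set H' := H.map σ with hH'
  set K' := K.map σ with hK'
  set Cm : Matrix (Fin p) (Fin d × Fin q) F :=
    Matrix.of fun (i : Fin p) (dq : Fin d × Fin q) => (H ^ (dq.1 : ℕ) * K) i dq.2 with hCm
  -- the mapped controllability matrix
  have hCmap : ∀ (i : Fin p) (dq : Fin d × Fin q),
      (Cm.map σ) i dq = (H' ^ (dq.1 : ℕ) * K') i dq.2 := by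
    intro i dq
    have : (H ^ (dq.1 : ℕ) * K).map σ = H' ^ (dq.1 : ℕ) * K' := by
      rw [Matrix.map_mul]
      congr 1
      have := map_pow (σ.mapMatrix (m := Fin p)) H (dq.1 : ℕ)
      simpa [RingHom.mapMatrix_apply] using this
    calc (Cm.map σ) i dq = σ ((H ^ (dq.1 : ℕ) * K) i dq.2) := rfl
      _ = ((H ^ (dq.1 : ℕ) * K).map σ) i dq.2 := rfl
      _ = (H' ^ (dq.1 : ℕ) * K') i dq.2 := by rw [this]
  -- left kernel characterization of the controllability matrix rank
  have h_ctrb : Cm.rank = p ↔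
      ∀ v : Fin p → E, (∀ j : Fin d, v ᵥ* (H' ^ (j : ℕ) * K') = 0) → v = 0 := by
    rw [← rank_map_eq_card_iff σ Cm, rank_eq_card_iff_vecMul]
    constructor
    · intro h v hv
      apply h v
      ext jk
      obtain ⟨j, k⟩ := jk
      have : (v ᵥ* Cm.map σ) (j, k) = (v ᵥ* (H' ^ (j : ℕ) * K')) k := by
        simp only [Matrix.vecMul, dotProduct]
        congr 1
        ext i
        rw [hCmap i (j, k)]
      rw [this, hv j]
      rfl
    · intro h v hv
      apply h v
      intro j
      ext k
      have : (v ᵥ* Cm.map σ) (j, k) = (v ᵥ* (H' ^ (j : ℕ) * K')) k := by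
        simp only [Matrix.vecMul, dotProduct]
        congr 1
        ext i
        rw [hCmap i (j, k)]
      rw [← this, hv]
      rfl
  -- left kernel characterization of the PBH matrix rank
  have h_pbh : ∀ lam : E,
      (Matrix.fromCols (lam • (1 : Matrix (Fin p) (Fin p) E) - H') K').rank = p ↔
      ∀ w : Fin p → E, w ᵥ* H' = lam • w → w ᵥ* K' = 0 → w = 0 := by
    intro lam
    rw [rank_eq_card_iff_vecMul]
    constructor
    · intro h w hw1 hw2
      apply h w
      rw [Matrix.vecMul_fromCols]
      have hzero : w ᵥ* (lam • (1 : Matrix (Fin p) (Fin p) E) - H') = 0 := by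
        rw [Matrix.vecMul_sub, vecMul_smul_matrix, Matrix.vecMul_one, hw1, sub_self]
      rw [hzero, hw2]
      ext (i | i) <;> rfl
    · intro h w hw
      rw [Matrix.vecMul_fromCols] at hw
      have hw1 : w ᵥ* (lam • (1 : Matrix (Fin p) (Fin p) E) - H') = 0 := by
        ext i; exact congrFun hw (Sum.inl i)
      have hw2 : w ᵥ* K' = 0 := by
        ext i; exact congrFun hw (Sum.inr i)
      apply h w _ hw2
      rw [Matrix.vecMul_sub, vecMul_smul_matrix, Matrix.vecMul_one] at hw1
      have := sub_eq_zero.mp hw1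
      exact this.symm
  rw [h_ctrb]
  constructor
  · -- controllability ⇒ PBH
    intro h lam _
    rw [h_pbh lam]
    intro w hw1 hw2
    apply h w
    intro j
    have hpow : ∀ n : ℕ, w ᵥ* H' ^ n = lam ^ n • w := by
      intro n
      induction n with
      | zero => simp
      | succ n ih =>
          rw [pow_succ, ← Matrix.vecMul_vecMul, ih, Matrix.smul_vecMul, hw1,
            ← smul_assoc, smul_eq_mul, pow_succ]
    rw [← Matrix.vecMul_vecMul, hpow, Matrix.smul_vecMul, hw2, smul_zero]
  · -- PBH ⇒ controllability
    intro hpbh v hv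
    by_contra hv0
    -- extend the annihilation to all powers using the minimal polynomial
    haveI : Nonempty (Fin p) := Fin.pos_iff_nonempty.mp hp
    have hint : IsIntegral F H := IsIntegral.of_finite F H
    have hmonic : (minpoly F H).Monic := minpoly.monic hint
    have hdegpos : 0 < (minpoly F H).natDegree := minpoly.natDegree_pos hint
    have hall : ∀ j : ℕ, v ᵥ* (H' ^ j * K') = 0 := by
      intro j
      set r := (X ^ j : F[X]) %ₘ minpoly F H with hr
      have hrdeg : r.natDegree < d := by
        by_cases hr0 : r = 0
        · rw [hr0]; simpa using Nat.lt_of_lt_of_le hdegpos hd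
        · have := Polynomial.degree_modByMonic_lt (X ^ j : F[X]) hmonic
          have := Polynomial.natDegree_lt_natDegree hr0 this
          omega
      have hkey : H ^ j = ∑ i ∈ Finset.range d, r.coeff i • H ^ i := by
        have h1 : H ^ j = Polynomial.aeval H (X ^ j : F[X]) := by simp
        have h2 : (X ^ j : F[X]) = r + minpoly F H * ((X ^ j : F[X]) /ₘ minpoly F H) :=
          (Polynomial.modByMonic_add_div _ (minpoly F H)).symm
        rw [h1, h2, map_add, _root_.map_mul, minpoly.aeval, zero_mul, add_zero]
        exact Polynomial.aeval_eq_sum_range' hrdeg H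
      have hkeyK : H' ^ j * K' = ∑ i ∈ Finset.range d, σ (r.coeff i) • (H' ^ i * K') := by
        have hFK : H ^ j * K = ∑ i ∈ Finset.range d, r.coeff i • (H ^ i * K) := by
          rw [hkey, Matrix.sum_mul]
          congr 1
          ext i
          rw [Matrix.smul_mul]
        have hmap : (H ^ j * K).map σ = H' ^ j * K' := by
          rw [Matrix.map_mul]
          congr 1
          have := map_pow (σ.mapMatrix (m := Fin p)) H j
          simpa [RingHom.mapMatrix_apply] using this
        have hmapi : ∀ i : ℕ, (H ^ i * K).map σ = H' ^ i * K' := by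
          intro i
          rw [Matrix.map_mul]
          congr 1
          have := map_pow (σ.mapMatrix (m := Fin p)) H i
          simpa [RingHom.mapMatrix_apply] using this
        rw [← hmap, hFK]
        ext a b
        simp only [Matrix.map_apply, Matrix.sum_apply, Matrix.smul_apply, smul_eq_mul,
          map_sum, _root_.map_mul]
        refine Finset.sum_congr rfl fun x _ => ?_
        rw [← hmapi x, Matrix.map_apply]
      rw [hkeyK]
      rw [vecMul_sum_matrix]
      apply Finset.sum_eq_zero
      intro i hi
      rw [vecMul_smul_matrix]
      have hiv : v ᵥ* (H' ^ i * K') = 0 := by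
        have : i < d := Finset.mem_range.mp hi
        simpa using hv ⟨i, this⟩
      rw [hiv, smul_zero]
    -- the invariant subspace of common left annihilators
    set V : Submodule E (Fin p → E) :=
      { carrier := {w | ∀ j : ℕ, w ᵥ* (H' ^ j * K') = 0}
        add_mem' := by
          intro a b ha hb j
          rw [Matrix.add_vecMul, ha j, hb j, add_zero]
        zero_mem' := by
          intro j
          rw [Matrix.zero_vecMul]
        smul_mem' := by
          intro c a ha j
          rw [Matrix.smul_vecMul, ha j, smul_zero] } with hV
    have hvV : v ∈ V := hall
    -- the endomorphism w ↦ w ᵥ* H'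
    set f : (Fin p → E) →ₗ[E] (Fin p → E) := Matrix.toLinAlgEquiv' H'ᵀ with hf
    have hfapp : ∀ w : Fin p → E, f w = w ᵥ* H' := by
      intro w
      show Matrix.toLinAlgEquiv' H'ᵀ w = _
      rw [Matrix.toLinAlgEquiv'_apply, Matrix.mulVec_transpose]
    have hVinv : ∀ w ∈ V, f w ∈ V := by
      intro w hw j
      rw [hfapp]
      rw [Matrix.vecMul_vecMul]
      have : H' * (H' ^ j * K') = H' ^ (j + 1) * K' := by
        rw [← Matrix.mul_assoc, ← pow_succ']
      rw [this]
      exact hw (j + 1)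
    -- Cayley–Hamilton over E and splitting
    set χ : E[X] := H'.charpoly with hχ
    have hχmap : χ = (H.charpoly).map σ := by
      rw [hχ]
      exact Matrix.charpoly_map H σ
    have hχmonic : χ.Monic := H'.charpoly_monic
    have hχsplits : χ.Splits := by
      rw [hχmap]
      exact hsplit
    have hχprod : χ = (χ.roots.map (fun a => X - C a)).prod :=
      hχsplits.eq_prod_roots_of_monic hχmonic
    set l : List E := χ.roots.toList with hl
    have hlprod : (l.map (fun a => X - C a)).prod = (χ.roots.map (fun a => X - C a)).prod := by
      conv_rhs => rw [← Multiset.coe_toList χ.roots]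
      rw [Multiset.map_coe, Multiset.prod_coe]
    have hann : (Polynomial.aeval f ((l.map (fun a => X - C a)).prod)) v = 0 := by
      rw [hlprod, ← hχprod]
      have h1 : Polynomial.aeval f χ =
          Matrix.toLinAlgEquiv' (Polynomial.aeval H'ᵀ χ) := by
        rw [hf]
        exact Polynomial.aeval_algHom_apply
          (Matrix.toLinAlgEquiv' (R := E) (n := Fin p)).toAlgHom H'ᵀ χ
      rw [h1, aeval_transpose, hχ, Matrix.aeval_self_charpoly]
      simp
    obtain ⟨lam, hlam, w, hwV, hw0, hfw⟩ :=
      exists_eigen_of_prod f V hVinv l v hvV hv0 hann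
    -- lam is a root of the characteristic polynomial
    have hroot : (Polynomial.aeval lam) H.charpoly = 0 := by
      have hmem : lam ∈ χ.roots := (Multiset.mem_toList).mp hlam
      have : χ.IsRoot lam := Polynomial.isRoot_of_mem_roots hmem
      rw [Polynomial.aeval_def, ← Polynomial.eval_map, ← hχmap]
      exact this
    -- contradiction with the PBH condition at lam
    have hfull := (h_pbh lam).mp (hpbh lam hroot)
    apply hw0
    apply hfull w
    · rw [← hfapp, hfw]
    · have := hwV 0
      simpa using this
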